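/- The composite functor P_ω ∘ P_ω (double finite powerset) is not zippable: there exist sets X, Y and distinct elements t₁ ≠ t₂ of P_ω P_ω(X+Y) that are identified by the map ⟨P_ωP_ω(X+!), P_ωP_ω(!+Y)⟩. -/
import Mathlib


/-- The double finite powerset functor `P_ω ∘ P_ω` is not zippable: there are
sets `X, Y` and distinct finite sets of finite subsets of `X + Y` that are
identified by `⟨P_ωP_ω(X+!), P_ωP_ω(!+Y)⟩`. -/
theorem doublePowerset_not_zippable :
    ∃ (X Y : Type) (t₁ t₂ : Set (Set (X ⊕ Y))),
      t₁.Finite ∧ (∀ s ∈ t₁, s.Finite) ∧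
      t₂.Finite ∧ (∀ s ∈ t₂, s.Finite) ∧
      t₁ ≠ t₂ ∧
      (Set.image (Sum.map (id : X → X) (fun _ : Y => PUnit.unit))) '' t₁ =
        (Set.image (Sum.map (id : X → X) (fun _ : Y => PUnit.unit))) '' t₂ ∧
      (Set.image (Sum.map (fun _ : X => PUnit.unit) (id : Y → Y))) '' t₁ =
        (Set.image (Sum.map (fun _ : X => PUnit.unit) (id : Y → Y))) '' t₂ := by
  refine ⟨Bool, Bool,
    {({Sum.inl true, Sum.inr true} : Set (Bool ⊕ Bool)), {Sum.inl false, Sum.inr false}},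
    {({Sum.inl true, Sum.inr false} : Set (Bool ⊕ Bool)), {Sum.inl false, Sum.inr true}},
    ?_, ?_, ?_, ?_, ?_, ?_, ?_⟩
  · exact (Set.finite_singleton _).insert _
  · rintro s (rfl | rfl) <;> exact (Set.finite_singleton _).insert _
  · exact (Set.finite_singleton _).insert _
  · rintro s (rfl | rfl) <;> exact (Set.finite_singleton _).insert _
  · intro h
    have : ({Sum.inl true, Sum.inr true} : Set (Bool ⊕ Bool)) ∈
        ({({Sum.inl true, Sum.inr false} : Set (Bool ⊕ Bool)),
          {Sum.inl false, Sum.inr true}} : Set (Set (Bool ⊕ Bool))) := by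
      rw [← h]; left; rfl
    rcases this with h' | h'
    · have := h' ▸ (show (Sum.inr true : Bool ⊕ Bool) ∈
        ({Sum.inl true, Sum.inr true} : Set (Bool ⊕ Bool)) by right; rfl)
      simp at this
    · have := h' ▸ (show (Sum.inl true : Bool ⊕ Bool) ∈
        ({Sum.inl true, Sum.inr true} : Set (Bool ⊕ Bool)) by left; rfl)
      simp at this
  · simp only [Set.image_insert_eq, Set.image_singleton, Set.image_pair,
      Sum.map_inl, Sum.map_inr, id_eq]
  · simp only [Set.image_insert_eq, Set.image_singleton, Set.image_pair,
      Sum.map_inl, Sum.map_inr, id_eq]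
    exact Set.pair_comm _ _
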